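/- Let g : ℝ → ℝ and suppose F(x,y) = g(x+y) - g(x) - g(y) is continuous on ℝ². Define u(t) = g(t) - (g(1) - g(0))·t. Then u(1) = u(0), F(x,y) = u(x+y) - u(x) - u(y) for all x, y, and the restriction of u to ℚ is uniformly continuous on [-M,M] ∩ ℚ for every M ≥ 1. -/

import Mathlib

open intervalIntegral MeasureTheory

theorem key (g : ℝ → ℝ) (F : ℝ × ℝ → ℝ)
    (hF : ∀ x y : ℝ, F (x, y) = g (x + y) - g x - g y)
    (hFcont : Continuous F) :
    ∃ v : ℝ → ℝ, Continuous v ∧ ∀ r : ℚ, g r - (g 1 - g 0) * r = v r := by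
  set c : ℝ → ℝ := fun x => x * g 1 + (∫ t in (0:ℝ)..x, F (t, 1)) - ∫ t in (0:ℝ)..(1:ℝ), F (t, x) with hc_def
  have hI : ∀ (e₁ e₂ : ℝ → ℝ), Continuous e₁ → Continuous e₂ → ∀ a b : ℝ,
      IntervalIntegrable (fun t => F (e₁ t, e₂ t)) volume a b := by
    intro e₁ e₂ h1 h2 a b
    exact (hFcont.comp (h1.prodMk h2)).intervalIntegrable a b
  have hccont : Continuous c := by
    apply Continuous.sub
    · exact (continuous_id.mul continuous_const).add
        (intervalIntegral.continuous_primitive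
          (hI (fun t => t) (fun _ => 1) continuous_id continuous_const) 0)
    · exact continuous_parametric_intervalIntegral_of_continuous'
        (f := fun x t => F (t, x)) (μ := volume)
        (hFcont.comp (by fun_prop)) 0 1
  have hδc : ∀ x y : ℝ, c (x + y) - c x - c y = F (x, y) := by
    intro x y
    have P : (∫ t in (0:ℝ)..(x+y), F (t, 1)) - (∫ t in (0:ℝ)..x, F (t, 1)) - (∫ t in (0:ℝ)..y, F (t, 1))
        = (∫ s in (1:ℝ)..(1+y), F (x, s)) - ∫ s in (0:ℝ)..y, F (x, s) := by
      have h1 : (∫ t in (0:ℝ)..(x+y), F (t, 1))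
          = (∫ t in (0:ℝ)..x, F (t, 1)) + ∫ t in x..(x+y), F (t, 1) :=
        (intervalIntegral.integral_add_adjacent_intervals
          (hI _ _ continuous_id continuous_const 0 x)
          (hI _ _ continuous_id continuous_const x (x+y))).symm
      have h2 : (∫ t in x..(x+y), F (t, 1)) = ∫ t in (0:ℝ)..y, F (x + t, 1) := by
        rw [intervalIntegral.integral_comp_add_left (fun t => F (t, 1)) x, add_zero]
      have h3 : (∫ t in (0:ℝ)..y, F (x + t, 1)) - (∫ t in (0:ℝ)..y, F (t, 1))
          = (∫ t in (0:ℝ)..y, F (x, 1 + t)) - ∫ t in (0:ℝ)..y, F (x, t) := by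
        rw [← intervalIntegral.integral_sub
            (hI (fun t => x + t) (fun _ => 1) (by fun_prop) continuous_const 0 y)
            (hI (fun t => t) (fun _ => 1) continuous_id continuous_const 0 y),
          ← intervalIntegral.integral_sub
            (hI (fun _ => x) (fun t => 1 + t) continuous_const (by fun_prop) 0 y)
            (hI (fun _ => x) (fun t => t) continuous_const continuous_id 0 y)]
        apply intervalIntegral.integral_congr
        intro t _
        simp only [hF]; ring_nf
      have h4 : (∫ t in (0:ℝ)..y, F (x, 1 + t)) = ∫ s in (1:ℝ)..(1+y), F (x, s) := by
        rw [intervalIntegral.integral_comp_add_left (fun s => F (x, s)) 1, add_zero]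
      linarith [h1, h2, h3, h4]
    have Q : (∫ t in (0:ℝ)..(1:ℝ), F (t, x + y)) - (∫ t in (0:ℝ)..(1:ℝ), F (t, x))
          - (∫ t in (0:ℝ)..(1:ℝ), F (t, y))
        = (∫ s in y..(y+1), F (x, s)) - F (x, y) - ∫ s in (0:ℝ)..(1:ℝ), F (x, s) := by
      have h1 : (∫ t in (0:ℝ)..(1:ℝ), (F (t, x + y) - F (t, x) - F (t, y)))
          = (∫ t in (0:ℝ)..(1:ℝ), F (t, x + y)) - (∫ t in (0:ℝ)..(1:ℝ), F (t, x))
            - (∫ t in (0:ℝ)..(1:ℝ), F (t, y)) := by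
        rw [intervalIntegral.integral_sub
            ((hI (fun t => t) (fun _ => x + y) continuous_id continuous_const 0 1).sub
              (hI (fun t => t) (fun _ => x) continuous_id continuous_const 0 1))
            (hI (fun t => t) (fun _ => y) continuous_id continuous_const 0 1),
          intervalIntegral.integral_sub
            (hI (fun t => t) (fun _ => x + y) continuous_id continuous_const 0 1)
            (hI (fun t => t) (fun _ => x) continuous_id continuous_const 0 1)]
      have h1' : (∫ t in (0:ℝ)..(1:ℝ), (F (t, x + y) - F (t, x) - F (t, y)))
          = ∫ t in (0:ℝ)..(1:ℝ), (F (x, y + t) - F (x, y) - F (x, t)) := by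
        apply intervalIntegral.integral_congr
        intro t _
        simp only [hF]; ring_nf
      have h2 : (∫ t in (0:ℝ)..(1:ℝ), (F (x, y + t) - F (x, y) - F (x, t)))
          = (∫ t in (0:ℝ)..(1:ℝ), F (x, y + t)) - F (x, y)
            - ∫ t in (0:ℝ)..(1:ℝ), F (x, t) := by
        rw [intervalIntegral.integral_sub
            ((hI (fun _ => x) (fun t => y + t) continuous_const (by fun_prop) 0 1).sub
              ((continuous_const (y := F (x, y))).intervalIntegrable 0 1))
            (hI (fun _ => x) (fun t => t) continuous_const continuous_id 0 1),
          intervalIntegral.integral_sub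
            (hI (fun _ => x) (fun t => y + t) continuous_const (by fun_prop) 0 1)
            ((continuous_const (y := F (x, y))).intervalIntegrable 0 1)]
        simp
      have h3 : (∫ t in (0:ℝ)..(1:ℝ), F (x, y + t)) = ∫ s in y..(y+1), F (x, s) := by
        rw [intervalIntegral.integral_comp_add_left (fun s => F (x, s)) y, add_zero]
      linarith [h1, h1', h2, h3]
    have splitA : (∫ s in (0:ℝ)..(1:ℝ), F (x, s)) + (∫ s in (1:ℝ)..(1+y), F (x, s))
        = ∫ s in (0:ℝ)..(1+y), F (x, s) :=
      intervalIntegral.integral_add_adjacent_intervals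
        (hI (fun _ => x) (fun t => t) continuous_const continuous_id 0 1)
        (hI (fun _ => x) (fun t => t) continuous_const continuous_id 1 (1+y))
    have splitB : (∫ s in (0:ℝ)..y, F (x, s)) + (∫ s in y..(y+1), F (x, s))
        = ∫ s in (0:ℝ)..(y+1), F (x, s) :=
      intervalIntegral.integral_add_adjacent_intervals
        (hI (fun _ => x) (fun t => t) continuous_const continuous_id 0 y)
        (hI (fun _ => x) (fun t => t) continuous_const continuous_id y (y+1))
    have hyx : (1:ℝ) + y = y + 1 := by ring
    rw [hyx] at splitA
    simp only [hc_def]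
    rw [hyx] at P
    linarith [P, Q, splitA, splitB]
  -- a := g - c is additive
  have hadd : ∀ x y : ℝ, (g (x+y) - c (x+y)) = (g x - c x) + (g y - c y) := by
    intro x y
    have := hδc x y
    have h2 := hF x y
    linarith
  set f : ℝ →+ ℝ := AddMonoidHom.mk' (fun t => g t - c t) hadd with hf_def
  have hrat : ∀ r : ℚ, g r - c r = (r : ℝ) * (g 1 - c 1) := by
    intro r
    have := map_ratCast_smul f ℝ ℝ r (1 : ℝ)
    simpa [smul_eq_mul, hf_def] using this
  refine ⟨fun t => c t + (g 0 - c 1) * t, by fun_prop, fun r => ?_⟩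
  show g ↑r - (g 1 - g 0) * ↑r = c ↑r + (g 0 - c 1) * ↑r
  linarith [hrat r]

theorem u_uniformly_continuous_on_rationals (g : ℝ → ℝ) (F : ℝ × ℝ → ℝ)
    (hF : ∀ x y : ℝ, F (x, y) = g (x + y) - g x - g y)
    (hFcont : Continuous F)
    (u : ℝ → ℝ) (hu : ∀ t : ℝ, u t = g t - (g 1 - g 0) * t) :
    u 1 = u 0 ∧
      (∀ x y : ℝ, F (x, y) = u (x + y) - u x - u y) ∧
      ∀ M : ℝ, 1 ≤ M → ∀ ε : ℝ, 0 < ε → ∃ δ : ℝ, 0 < δ ∧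
        ∀ r₁ r₂ : ℚ, |(r₁ : ℝ)| ≤ M → |(r₂ : ℝ)| ≤ M →
          |(r₁ : ℝ) - (r₂ : ℝ)| < δ → |u r₁ - u r₂| < ε := by
  refine ⟨by rw [hu, hu]; ring, fun x y => by rw [hu, hu, hu, hF]; ring, ?_⟩
  obtain ⟨v, hvcont, hvr⟩ := key g F hF hFcont
  intro M hM ε hε
  have hucompact : UniformContinuousOn v (Set.Icc (-M) M) :=
    (isCompact_Icc).uniformContinuousOn_of_continuous (hvcont.continuousOn)
  rw [Metric.uniformContinuousOn_iff] at hucompact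
  obtain ⟨δ, hδ, hδ'⟩ := hucompact ε hε
  refine ⟨δ, hδ, fun r₁ r₂ h1 h2 h3 => ?_⟩
  have m1 : (r₁ : ℝ) ∈ Set.Icc (-M) M := abs_le.mp h1
  have m2 : (r₂ : ℝ) ∈ Set.Icc (-M) M := abs_le.mp h2
  have := hδ' _ m1 _ m2 (by rwa [Real.dist_eq])
  rw [Real.dist_eq] at this
  rw [hu, hu, hvr r₁, hvr r₂]
  exact this
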